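/- For every positive integer m, if 3m is represented by the form x² + y² + 7z² with x ≡ y ≡ z (mod 3), then 3m is represented by the ternary lattice with Gram matrix [[1,0,0],[0,2,1],[0,1,4]]. -/
import Mathlib

theorem stmt_17 (m : ℕ) (hm : 0 < m)
    (h : ∃ x y z : ℤ, x ^ 2 + y ^ 2 + 7 * z ^ 2 = 3 * (m : ℤ) ∧
      x % 3 = y % 3 ∧ y % 3 = z % 3) :
    ∃ a b c : ℤ, a ^ 2 + 2 * b ^ 2 + 4 * c ^ 2 + 2 * b * c = 3 * (m : ℤ) := by
  obtain ⟨x, y, z, hxyz, hxy, hyz⟩ := h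
  obtain ⟨s, hs⟩ : (3 : ℤ) ∣ (y - x) := by omega
  obtain ⟨t, ht⟩ : (3 : ℤ) ∣ (z - x) := by omega
  refine ⟨3 * x + s + 7 * t, s + t, s - 2 * t, ?_⟩
  have hy : y = x + 3 * s := by linarith
  have hz : z = x + 3 * t := by linarith
  subst hy hz
  linear_combination hxyz
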